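/- arXiv:1806.06028 — 2 statements merged into one kernel-verified Lean document; each statement's English description precedes it below -/
import Mathlib

section
/- Let h(x) = log(x) - ψ(x) for x > 0, where ψ is the digamma function. Then h is continuous, strictly decreasing, and for every c ∈ (0, ∞) the equation h(k) = c has a unique solution k ∈ (0, ∞). -/
open MeasureTheory Real Filter Set Topology

noncomputable def gammaPdf (k l x : ℝ) : ℝ :=
  l ^ (-k) * x ^ (k - 1) * Real.exp (-x / l) / Real.Gamma k

noncomputable def digamma (x : ℝ) : ℝ := deriv Real.Gamma x / Real.Gamma x

private lemma gamma_ne_neg_nat {x : ℝ} (hx : 0 < x) : ∀ m : ℕ, x ≠ -m :=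
  fun m => ne_of_gt (lt_of_le_of_lt (neg_nonpos.mpr m.cast_nonneg) hx)

private lemma hasDerivAt_logGamma {x : ℝ} (hx : 0 < x) :
    HasDerivAt (fun t => Real.log (Real.Gamma t)) (digamma x) x :=
  ((Real.differentiableAt_Gamma (gamma_ne_neg_nat hx)).hasDerivAt).log
    (Real.Gamma_pos_of_pos hx).ne'

private lemma digamma_rec {x : ℝ} (hx : 0 < x) : digamma (x + 1) = digamma x + 1 / x := by
  have h1 : HasDerivAt (fun t : ℝ => Real.log (Real.Gamma (t + 1))) (digamma (x + 1) * 1) x :=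
    (hasDerivAt_logGamma (by linarith)).comp x ((hasDerivAt_id x).add_const 1)
  have h2 : HasDerivAt (fun t : ℝ => Real.log (Real.Gamma t) + Real.log t)
      (digamma x + 1 / x) x := by
    rw [one_div]; exact (hasDerivAt_logGamma hx).add (Real.hasDerivAt_log hx.ne')
  have h3 : (fun t : ℝ => Real.log (Real.Gamma (t + 1))) =ᶠ[nhds x]
      (fun t : ℝ => Real.log (Real.Gamma t) + Real.log t) := by
    filter_upwards [Ioi_mem_nhds hx] with t ht
    rw [Real.Gamma_add_one (ne_of_gt ht), Real.log_mul (ne_of_gt ht)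
      (Real.Gamma_pos_of_pos ht).ne', add_comm]
  have := (h2.congr_of_eventuallyEq h3).unique h1
  rw [mul_one] at this
  linarith

private lemma digamma_le_log {x : ℝ} (hx : 0 < x) : digamma x ≤ Real.log x := by
  have hslope : slope (Real.log ∘ Real.Gamma) x (x + 1) = Real.log x := by
    rw [slope_def_field, Function.comp_apply, Function.comp_apply,
      Real.Gamma_add_one hx.ne', Real.log_mul hx.ne' (Real.Gamma_pos_of_pos hx).ne']
    field_simp
    ring
  have hd : DifferentiableAt ℝ (Real.log ∘ Real.Gamma) x := by
    have := hasDerivAt_logGamma hx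
    exact this.differentiableAt
  have h := Real.convexOn_log_Gamma.deriv_le_slope (mem_Ioi.mpr hx)
    (mem_Ioi.mpr (by linarith)) (lt_add_one x) hd
  rwa [hslope, show deriv (Real.log ∘ Real.Gamma) x = digamma x from
    (hasDerivAt_logGamma hx).deriv] at h

private lemma log_le_digamma_succ {x : ℝ} (hx : 0 < x) : Real.log x ≤ digamma (x + 1) := by
  have hx1 : (0:ℝ) < x + 1 := by linarith
  have hslope : slope (Real.log ∘ Real.Gamma) x (x + 1) = Real.log x := by
    rw [slope_def_field, Function.comp_apply, Function.comp_apply,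
      Real.Gamma_add_one hx.ne', Real.log_mul hx.ne' (Real.Gamma_pos_of_pos hx).ne']
    field_simp
    ring
  have hd : DifferentiableAt ℝ (Real.log ∘ Real.Gamma) (x + 1) :=
    (hasDerivAt_logGamma hx1).differentiableAt
  have h := Real.convexOn_log_Gamma.slope_le_deriv (mem_Ioi.mpr hx)
    (mem_Ioi.mpr hx1) (lt_add_one x) hd
  rwa [hslope, show deriv (Real.log ∘ Real.Gamma) (x + 1) = digamma (x + 1) from
    (hasDerivAt_logGamma hx1).deriv] at h

private lemma h_nonneg {x : ℝ} (hx : 0 < x) : 0 ≤ Real.log x - digamma x :=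
  sub_nonneg.mpr (digamma_le_log hx)

private lemma h_le_inv {x : ℝ} (hx : 0 < x) : Real.log x - digamma x ≤ 1 / x := by
  have := log_le_digamma_succ hx
  rw [digamma_rec hx] at this
  linarith

private lemma step_aux {u v : ℝ} (hu : 0 < u) (huv : u < v) :
    Real.log (u + 1) - Real.log u - (Real.log (v + 1) - Real.log v) < 1 / u - 1 / v := by
  have hv : 0 < v := hu.trans huv
  set r : ℝ := ((u + 1) * v) / (u * (v + 1)) with hr_def
  have hden : (0:ℝ) < u * (v + 1) := by positivity
  have hr : 0 < r := by positivity
  have hr1 : r ≠ 1 := by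
    rw [hr_def, Ne, div_eq_one_iff_eq hden.ne']
    nlinarith
  have hlog : Real.log r < r - 1 := Real.log_lt_sub_one_of_pos hr hr1
  have he : Real.log r = Real.log (u + 1) - Real.log u - (Real.log (v + 1) - Real.log v) := by
    rw [hr_def, Real.log_div (by positivity) hden.ne', Real.log_mul (by positivity) hv.ne',
      Real.log_mul hu.ne' (by positivity)]
    ring
  have h2 : r - 1 < 1 / u - 1 / v := by
    rw [hr_def, div_sub_one hden.ne', div_sub_div _ _ hu.ne' hv.ne', div_lt_div_iff₀ hden (by positivity)]
    nlinarith
  linarith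

private lemma h_succ_sub {u : ℝ} (hu : 0 < u) :
    (Real.log (u + 1) - digamma (u + 1)) - (Real.log u - digamma u)
      = Real.log (u + 1) - Real.log u - 1 / u := by
  rw [digamma_rec hu]; ring

private lemma key_strict_anti {x y : ℝ} (hx : 0 < x) (hxy : x < y) :
    Real.log y - digamma y < Real.log x - digamma x := by
  have hy : 0 < y := hx.trans hxy
  set H : ℝ → ℝ := fun t => Real.log t - digamma t with hH
  set g : ℕ → ℝ := fun n => H (y + n) - H (x + n) with hg
  have hgstep : ∀ n : ℕ, g n < g (n + 1) := by
    intro n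
    have hxn : (0:ℝ) < x + n := by positivity
    have hyn : (0:ℝ) < y + n := by linarith
    have hxyn : x + n < y + n := by linarith
    have hstep := step_aux hxn hxyn
    have h1 := h_succ_sub hxn
    have h2 := h_succ_sub hyn
    simp only [hg, hH]
    push_cast
    have e1 : y + (n + 1 : ℝ) = (y + n) + 1 := by ring
    have e2 : x + (n + 1 : ℝ) = (x + n) + 1 := by ring
    rw [e1, e2]
    linarith
  have hmono : StrictMono g := strictMono_nat_of_lt_succ hgstep
  have hbound : ∀ n : ℕ, g (n + 1) ≤ 1 / (n + 1 : ℝ) := by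
    intro n
    have hxn : (0:ℝ) < x + (n + 1 : ℕ) := by positivity
    have hyn : (0:ℝ) < y + (n + 1 : ℕ) := by positivity
    have h1 := h_nonneg hxn
    have h2 := h_le_inv hyn
    have h3 : 1 / (y + (n + 1 : ℕ)) ≤ 1 / (n + 1 : ℝ) := by
      apply one_div_le_one_div_of_le (by positivity)
      push_cast; linarith
    simp only [hg, hH] at *
    linarith
  have hg1 : g 1 ≤ 0 := by
    by_contra hcon
    push_neg at hcon
    obtain ⟨n, hn⟩ := exists_nat_gt (1 / g 1)
    have hn1 : 1 / g 1 < (n + 1 : ℝ) := by linarith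
    have h4 : 1 / (n + 1 : ℝ) < g 1 := by
      rw [div_lt_iff₀ (by positivity)]
      rw [div_lt_iff₀ hcon] at hn1
      linarith
    have h5 : g 1 ≤ g (n + 1) := hmono.monotone (Nat.succ_le_succ (Nat.zero_le n))
    have h6 := hbound n
    have h7 : g 1 ≤ 1 / (↑n + 1 : ℝ) := h5.trans h6
    linarith
  have h0 : g 0 < g 1 := hgstep 0
  have : g 0 = H y - H x := by simp [hg]
  rw [this] at h0
  simp only [hH] at h0 ⊢
  linarith

private lemma deriv_gamma_eq {x : ℝ} (hx : 0 < x) :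
    deriv Real.Gamma x = (deriv Complex.Gamma (x : ℂ)).re := by
  have hne : ∀ m : ℕ, (x : ℂ) ≠ -m := by
    intro m h
    have : x = -(m : ℝ) := by exact_mod_cast h
    exact gamma_ne_neg_nat hx m this
  have hc : HasDerivAt Complex.Gamma (deriv Complex.Gamma (x : ℂ)) (x : ℂ) :=
    (Complex.differentiableAt_Gamma _ hne).hasDerivAt
  have h1 := hc.real_of_complex
  have h2 : (fun t : ℝ => (Complex.Gamma (t : ℂ)).re) = Real.Gamma := by
    funext t
    rw [Complex.Gamma_ofReal]
    simp
  rw [h2] at h1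
  exact h1.deriv

private lemma continuousOn_digamma : ContinuousOn digamma (Set.Ioi 0) := by
  have hU : IsOpen {z : ℂ | 0 < z.re} := isOpen_lt continuous_const Complex.continuous_re
  have hdiff : DifferentiableOn ℂ Complex.Gamma {z : ℂ | 0 < z.re} := by
    intro z hz
    refine (Complex.differentiableAt_Gamma _ fun m => ?_).differentiableWithinAt
    intro h
    rw [h] at hz
    simp only [Set.mem_setOf_eq, Complex.neg_re, Complex.natCast_re] at hz
    have : (0:ℝ) ≤ (m:ℝ) := m.cast_nonneg
    linarith
  have hana := (hdiff.analyticOnNhd hU).deriv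
  have hcont : ContinuousOn (fun z : ℂ => deriv Complex.Gamma z) {z : ℂ | 0 < z.re} :=
    hana.continuousOn
  have hmaps : Set.MapsTo (fun x : ℝ => (x : ℂ)) (Set.Ioi 0) {z : ℂ | 0 < z.re} := by
    intro x hx; simpa using hx
  have h1 : ContinuousOn (fun x : ℝ => (deriv Complex.Gamma (x : ℂ)).re) (Set.Ioi 0) :=
    (Complex.continuous_re.comp_continuousOn
      (hcont.comp Complex.continuous_ofReal.continuousOn hmaps))
  have h2 : ContinuousOn Real.Gamma (Set.Ioi 0) := fun x hx =>
    (Real.differentiableAt_Gamma (gamma_ne_neg_nat hx)).continuousAt.continuousWithinAt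
  have h3 : ContinuousOn (fun x : ℝ => (deriv Complex.Gamma (x : ℂ)).re / Real.Gamma x)
      (Set.Ioi 0) := h1.div h2 (fun x hx => (Real.Gamma_pos_of_pos hx).ne')
  exact h3.congr fun x hx => by rw [digamma, deriv_gamma_eq hx]

theorem log_sub_digamma_bijective :
    ContinuousOn (fun x => Real.log x - digamma x) (Set.Ioi 0) ∧
    StrictAntiOn (fun x => Real.log x - digamma x) (Set.Ioi 0) ∧
    ∀ c > (0 : ℝ), ∃! x : ℝ, x ∈ Set.Ioi (0 : ℝ) ∧ Real.log x - digamma x = c := by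
  have hcont : ContinuousOn (fun x => Real.log x - digamma x) (Set.Ioi 0) := by
    refine ContinuousOn.sub ?_ continuousOn_digamma
    exact fun x hx => (Real.continuousAt_log (ne_of_gt hx)).continuousWithinAt
  have hanti : StrictAntiOn (fun x => Real.log x - digamma x) (Set.Ioi 0) :=
    fun a ha b _ hab => key_strict_anti ha hab
  refine ⟨hcont, hanti, fun c hc => ?_⟩
  set a : ℝ := 1 / (c + 3) ^ 2 with ha_def
  set b : ℝ := 2 / c with hb_def
  have hc3 : (0:ℝ) < c + 3 := by linarith
  have ha_pos : 0 < a := by positivity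
  have hb_pos : 0 < b := by positivity
  have hab : a < b := by
    rw [ha_def, hb_def, div_lt_div_iff₀ (by positivity) hc]
    nlinarith
  -- lower bound : H a > c
  have hHa : c < Real.log a - digamma a := by
    have h1 : digamma (a + 1) ≤ Real.log (a + 1) := digamma_le_log (by linarith)
    have h2 := digamma_rec ha_pos
    have hloga : Real.log a = -(2 * Real.log (c + 3)) := by
      rw [ha_def, one_div, Real.log_inv, Real.log_pow]
      norm_num
    have hlogs : Real.log (c + 3) ≤ c + 2 := by
      have := Real.log_le_sub_one_of_pos hc3
      linarith
    have hinva : 1 / a = (c + 3) ^ 2 := by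
      rw [ha_def]; field_simp
    have ha_le : a ≤ 1 / 9 := by
      rw [ha_def, div_le_div_iff₀ (by positivity) (by norm_num)]
      nlinarith
    have hloga1 : Real.log (a + 1) ≤ 1 / 9 := by
      have := Real.log_le_sub_one_of_pos (show (0:ℝ) < a + 1 by linarith)
      linarith
    have hkey : c < Real.log a - Real.log (a + 1) + 1 / a := by
      rw [hloga, hinva]
      nlinarith
    linarith
  -- upper bound : H b < c
  have hHb : Real.log b - digamma b < c := by
    have h1 := h_le_inv hb_pos
    have h2 : 1 / b = c / 2 := by rw [hb_def]; field_simp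
    rw [h2] at h1
    linarith
  -- IVT
  have hsub : Set.Icc a b ⊆ Set.Ioi 0 := fun x hx => lt_of_lt_of_le ha_pos hx.1
  have hivt := intermediate_value_Icc' hab.le (hcont.mono hsub)
  have hmem : c ∈ Set.Icc (Real.log b - digamma b) (Real.log a - digamma a) :=
    ⟨hHb.le, hHa.le⟩
  obtain ⟨x, hx, hfx⟩ := hivt hmem
  have hx0 : x ∈ Set.Ioi (0:ℝ) := hsub hx
  refine ⟨x, ⟨hx0, hfx⟩, ?_⟩
  rintro z ⟨hz0, hzc⟩
  exact hanti.injOn hz0 hx0 (hzc.trans hfx.symm)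
end

section
/- Let p = p(·, k, λ) be the Gamma(k, λ) density and let f : (0,∞) → ℝ be differentiable with lim_{x→0⁺} f(x)p(x) = 0, lim_{x→∞} f(x)p(x) = 0, and such that x ↦ f'(x)p(x) + f(x)p'(x) is integrable on (0,∞). If X ~ Gamma(k, λ), then E[f'(X) + ((k-1)/X - 1/λ) f(X)] = 0. -/
open MeasureTheory Real Filter Set Topology

lemma gammaPdf_nonneg {k l : ℝ} (hk : 0 < k) (hl : 0 < l) {x : ℝ} (hx : 0 < x) :
    0 ≤ gammaPdf k l x := by
  unfold gammaPdf
  have h1 : (0:ℝ) < l ^ (-k) := Real.rpow_pos_of_pos hl _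
  have h2 : (0:ℝ) ≤ x ^ (k - 1) := Real.rpow_nonneg hx.le _
  have h3 : (0:ℝ) < Real.Gamma k := Real.Gamma_pos_of_pos hk
  positivity

lemma hasDerivAt_gammaPdf {k l : ℝ} (hl : 0 < l) {x : ℝ} (hx : 0 < x) :
    HasDerivAt (gammaPdf k l) (((k - 1) / x - 1 / l) * gammaPdf k l x) x := by
  have h1 : HasDerivAt (fun y : ℝ => y ^ (k - 1)) ((k - 1) * x ^ (k - 1 - 1)) x :=
    Real.hasDerivAt_rpow_const (Or.inl hx.ne')
  have h2 : HasDerivAt (fun y : ℝ => Real.exp (-y / l)) (Real.exp (-x / l) * (-1 / l)) x := by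
    have hi : HasDerivAt (fun y : ℝ => -y / l) (-1 / l) x := by
      simpa using ((hasDerivAt_id x).neg.div_const l)
    exact hi.exp
  have h3 := ((h1.mul h2).const_mul (l ^ (-k))).div_const (Real.Gamma k)
  convert h3 using 1
  rotate_left 2
  · ext y; simp [gammaPdf]; ring
  · have hx' : x ^ (k - 1 - 1) = x ^ (k - 1) / x := Real.rpow_sub_one hx.ne' _
    simp only [gammaPdf, hx']
    field_simp
    ring
  all_goals rfl

/-- FTC on `(0, ∞)` with vanishing limits at both ends. -/
lemma integral_Ioi_zero_eq_zero {F F' : ℝ → ℝ}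
    (hd : ∀ x ∈ Ioi (0:ℝ), HasDerivAt F (F' x) x)
    (hi : IntegrableOn F' (Ioi 0))
    (h0 : Tendsto F (nhdsWithin 0 (Ioi 0)) (nhds 0))
    (hinf : Tendsto F atTop (nhds 0)) :
    ∫ x in Ioi (0:ℝ), F' x = 0 := by
  set a : ℕ → ℝ := fun n => 1 / (n + 1) with ha
  set b : ℕ → ℝ := fun n => (n : ℝ) + 1 with hb
  have hapos : ∀ n, 0 < a n := fun n => by positivity
  have hab : ∀ n, a n ≤ b n := fun n => by
    have : (1:ℝ) ≤ (n:ℝ) + 1 := by exact_mod_cast Nat.one_le_iff_ne_zero.mpr (Nat.succ_ne_zero n)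
    calc a n ≤ 1 := by rw [ha]; rw [div_le_one (by positivity)]; linarith [Nat.cast_nonneg (α := ℝ) n]
    _ ≤ b n := this
  have hsub : ∀ n, Ioc (a n) (b n) ⊆ Ioi (0:ℝ) := fun n y hy => lt_trans (hapos n) hy.1
  have ha0 : Tendsto a atTop (nhds 0) := tendsto_one_div_add_atTop_nhds_zero_nat
  have hbtop : Tendsto b atTop atTop :=
    tendsto_atTop_add_const_right _ 1 tendsto_natCast_atTop_atTop
  -- AECover
  have hcov : AECover (MeasureTheory.volume.restrict (Ioi (0:ℝ))) atTop
      (fun n => Ioc (a n) (b n)) := by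
    refine ⟨?_, fun n => measurableSet_Ioc⟩
    filter_upwards [ae_restrict_mem measurableSet_Ioi] with x hx
    have h1 : ∀ᶠ n in atTop, a n < x := ha0.eventually_lt_const hx
    have h2 : ∀ᶠ n in atTop, x ≤ b n := hbtop.eventually_ge_atTop x
    filter_upwards [h1, h2] with n hn1 hn2
    exact ⟨hn1, hn2⟩
  have hlim1 : Tendsto (fun n => ∫ x in Ioc (a n) (b n), F' x) atTop
      (nhds (∫ x in Ioi (0:ℝ), F' x)) := by
    have := hcov.integral_tendsto_of_countably_generated hi
    refine this.congr fun n => ?_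
    rw [Measure.restrict_restrict measurableSet_Ioc,
      inter_eq_self_of_subset_left (hsub n)]
  have hval : ∀ n, ∫ x in Ioc (a n) (b n), F' x = F (b n) - F (a n) := by
    intro n
    rw [← intervalIntegral.integral_of_le (hab n)]
    refine intervalIntegral.integral_eq_sub_of_hasDerivAt (fun x hx => ?_) ?_
    · rw [uIcc_of_le (hab n)] at hx
      exact hd x (lt_of_lt_of_le (hapos n) hx.1)
    · rw [intervalIntegrable_iff_integrableOn_Ioc_of_le (hab n)]
      exact hi.mono_set (hsub n)
  have hlim2 : Tendsto (fun n => ∫ x in Ioc (a n) (b n), F' x) atTop (nhds 0) := by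
    simp only [hval]
    have hFa : Tendsto (fun n => F (a n)) atTop (nhds 0) :=
      h0.comp (tendsto_nhdsWithin_of_tendsto_nhds_of_eventually_within _ ha0
        (Eventually.of_forall fun n => hapos n))
    have hFb : Tendsto (fun n => F (b n)) atTop (nhds 0) := hinf.comp hbtop
    simpa using hFb.sub hFa
  exact tendsto_nhds_unique hlim1 hlim2

theorem gamma_stein_identity {Ω : Type*} [MeasurableSpace Ω] (P : Measure Ω)
    [IsProbabilityMeasure P] (X : Ω → ℝ) (hX : Measurable X)
    (k l : ℝ) (hk : 0 < k) (hl : 0 < l)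
    (hlaw : Measure.map X P =
      MeasureTheory.volume.withDensity (fun x => ENNReal.ofReal (if 0 < x then gammaPdf k l x else 0)))
    (f f' : ℝ → ℝ)
    (hderiv : ∀ x > (0 : ℝ), HasDerivAt f (f' x) x)
    (h0 : Filter.Tendsto (fun x => f x * gammaPdf k l x) (nhdsWithin 0 (Set.Ioi 0)) (nhds 0))
    (hinf : Filter.Tendsto (fun x => f x * gammaPdf k l x) Filter.atTop (nhds 0))
    (hint : IntegrableOn
      (fun x => f' x * gammaPdf k l x + f x * (((k - 1) / x - 1 / l) * gammaPdf k l x))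
      (Set.Ioi 0)) :
    (∫ ω, (f' (X ω) + ((k - 1) / X ω - 1 / l) * f (X ω)) ∂P) = 0 := by
  set p : ℝ → ℝ := gammaPdf k l with hp
  set d : ℝ → ℝ := fun x => if 0 < x then p x else 0 with hd
  have hd_nonneg : ∀ x, 0 ≤ d x := by
    intro x
    by_cases hx : 0 < x
    · simpa [hd, hx] using gammaPdf_nonneg hk hl hx
    · simp [hd, hx]
  have hd_meas : Measurable d := by
    have hp_meas : Measurable p := by
      unfold p
      unfold gammaPdf
      fun_prop
    exact hp_meas.ite measurableSet_Ioi measurable_const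
  set μ : Measure ℝ :=
    MeasureTheory.volume.withDensity (fun x => ENNReal.ofReal (d x)) with hμ
  -- μ is concentrated on Ioi 0
  have hμIoi : μ (Ioi (0:ℝ))ᶜ = 0 := by
    rw [hμ, withDensity_apply _ measurableSet_Ioi.compl]
    rw [setLIntegral_congr_fun measurableSet_Ioi.compl
      ((fun x hx => by
        simp only [hd, mem_compl_iff, mem_Ioi, not_lt] at hx ⊢
        rw [if_neg (not_lt.mpr hx), ENNReal.ofReal_zero]))]
    simp
  set g : ℝ → ℝ := fun x => f' x + ((k - 1) / x - 1 / l) * f x with hg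
  -- a.e. strong measurability of g wrt μ
  have hgm : AEStronglyMeasurable g μ := by
    have hrestrict : μ.restrict (Ioi 0) = μ :=
      Measure.restrict_eq_self_of_ae_mem (by
        rw [ae_iff]; exact hμIoi)
    rw [← hrestrict]
    have hac : μ.restrict (Ioi 0) ≪ MeasureTheory.volume.restrict (Ioi 0) :=
      (withDensity_absolutelyContinuous _ _).restrict _
    have hf_cont : ContinuousOn f (Ioi 0) := fun x hx =>
      (hderiv x hx).continuousAt.continuousWithinAt
    have hf_ae : AEMeasurable f (MeasureTheory.volume.restrict (Ioi 0)) :=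
      hf_cont.aemeasurable measurableSet_Ioi
    have hf'_ae : AEMeasurable f' (MeasureTheory.volume.restrict (Ioi 0)) := by
      have : ∀ᵐ x ∂(MeasureTheory.volume.restrict (Ioi (0:ℝ))), f' x = deriv f x := by
        filter_upwards [ae_restrict_mem measurableSet_Ioi] with x hx
        exact ((hderiv x hx).deriv).symm
      exact (aemeasurable_congr this).mpr (measurable_deriv f).aemeasurable
    have : AEMeasurable g (MeasureTheory.volume.restrict (Ioi 0)) := by
      exact hf'_ae.add
        ((((measurable_const.div measurable_id).sub measurable_const).aemeasurable).mul hf_ae)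
    exact (this.mono_ac hac).aestronglyMeasurable
  calc (∫ ω, (f' (X ω) + ((k - 1) / X ω - 1 / l) * f (X ω)) ∂P)
      = ∫ x, g x ∂(Measure.map X P) := by
        rw [integral_map hX.aemeasurable (hlaw ▸ hgm)]
    _ = ∫ x, g x ∂μ := by rw [hlaw, hμ]
    _ = ∫ x, d x * g x := by
        rw [hμ]
        rw [show (fun x => ENNReal.ofReal (d x)) =
            fun x => ((Real.toNNReal (d x) : NNReal) : ENNReal) from rfl,
          integral_withDensity_eq_integral_smul hd_meas.real_toNNReal]
        congr 1; ext x
        simp [NNReal.smul_def, Real.coe_toNNReal _ (hd_nonneg x)]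
    _ = ∫ x in Ioi (0:ℝ), p x * g x := by
        rw [← integral_indicator measurableSet_Ioi]
        congr 1; ext x
        by_cases hx : 0 < x <;> simp [hd, hx, indicator]
    _ = ∫ x in Ioi (0:ℝ),
          (f' x * gammaPdf k l x + f x * (((k - 1) / x - 1 / l) * gammaPdf k l x)) := by
        refine setIntegral_congr_fun measurableSet_Ioi fun x hx => ?_
        simp only [hg, hp]; ring
    _ = 0 := by
        refine integral_Ioi_zero_eq_zero (F := fun x => f x * gammaPdf k l x)
          (fun x hx => ?_) hint h0 hinf
        exact (hderiv x hx).mul (hasDerivAt_gammaPdf hl hx)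
end
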